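/- Let m ∈ ℕ, y ∈ Y_m, and suppose 𝔉(y) contains at least one interval of odd cardinality (𝔉'(y) ≠ ∅). Then for any (x, x') ∈ S(y) one has 𝔖(x) ≠ ∅ and 𝔖(x') ≠ ∅. -/

import Mathlib

open Finset

/-- `X_m`: sequences `(x_0,…,x_m)` in `ℕ` with `x i ≤ x (i+1)` and `x i < x (i+2)`. -/
def IsX (m : ℕ) (x : ℕ → ℕ) : Prop :=
  (∀ i, i < m → x i ≤ x (i + 1)) ∧ (∀ i, i + 2 ≤ m → x i < x (i + 2))

/-- `Y_m`: sequences with `y i ≤ y (i+1)` and `y i + 2 ≤ y (i+2)`. -/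
def IsY (m : ℕ) (y : ℕ → ℕ) : Prop :=
  (∀ i, i < m → y i ≤ y (i + 1)) ∧ (∀ i, i + 2 ≤ m → y i + 2 ≤ y (i + 2))

/-- `ℰ_m`: weakly increasing sequences. -/
def IsE (m : ℕ) (e : ℕ → ℕ) : Prop := ∀ i, i < m → e i ≤ e (i + 1)

/-- `𝔖(x)`: indices `i ∈ [0,m]` with `x (i-1) < x i < x (i+1)`,
with conventions `x_{-1} = -∞`, `x_{m+1} = +∞`. -/
def SS (m : ℕ) (x : ℕ → ℕ) : Finset ℕ :=
  (Finset.range (m + 1)).filter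
    (fun i => (i = 0 ∨ x (i - 1) < x i) ∧ (i = m ∨ x i < x (i + 1)))

/-- `𝔉(y)`: intervals `[i,j] ⊆ [0,m]` with
`y_{i-1}-(i-1) < y_i-i = ⋯ = y_j-j < y_{j+1}-(j+1)` (conventions `±∞` at the ends),
encoded as pairs `(i, j)`. -/
def FF (m : ℕ) (y : ℕ → ℕ) : Finset (ℕ × ℕ) :=
  ((Finset.range (m + 1)) ×ˢ (Finset.range (m + 1))).filter
    (fun p => p.1 ≤ p.2 ∧
      (p.1 = 0 ∨ ((y (p.1 - 1) : ℤ) - ((p.1 : ℤ) - 1) < (y p.1 : ℤ) - (p.1 : ℤ))) ∧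
      (p.2 = m ∨ ((y p.2 : ℤ) - (p.2 : ℤ) < (y (p.2 + 1) : ℤ) - ((p.2 : ℤ) + 1))) ∧
      (∀ k ∈ Finset.Ico p.1 p.2, ((y k : ℤ) - (k : ℤ) = (y (k + 1) : ℤ) - ((k : ℤ) + 1))))

/-- `𝔉'(y)`: the intervals in `𝔉(y)` of odd cardinality. -/
def FF' (m : ℕ) (y : ℕ → ℕ) : Finset (ℕ × ℕ) :=
  (FF m y).filter (fun p => Odd (p.2 - p.1 + 1))

/-- `R(y)`: endpoints of intervals in `𝔉(y)`. -/
def RR (m : ℕ) (y : ℕ → ℕ) : Finset ℕ :=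
  (Finset.range (m + 1)).filter (fun k => ∃ p ∈ FF m y, k = p.1 ∨ k = p.2)

/-- `R_0(y)`: those `k` with `[k,k] ∈ 𝔉(y)`. -/
def RR0 (m : ℕ) (y : ℕ → ℕ) : Finset ℕ :=
  (Finset.range (m + 1)).filter (fun k => (k, k) ∈ FF m y)

/-- `S(y)`: pairs `(x, x') ∈ X_m × X_m` with `x + x' = y`,
`𝔖(x) ∪ 𝔖(x') = R(y)`, `𝔖(x) ∩ 𝔖(x') = R_0(y)`, and `𝔖(x') = ∅` if `𝔉'(y) = ∅`. -/
def IsS (m : ℕ) (y x x' : ℕ → ℕ) : Prop :=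
  IsX m x ∧ IsX m x' ∧ (∀ i, i ≤ m → x i + x' i = y i) ∧
  SS m x ∪ SS m x' = RR m y ∧ SS m x ∩ SS m x' = RR0 m y ∧
  (FF' m y = ∅ → SS m x' = ∅)

lemma key11 (m : ℕ) (y x x' : ℕ → ℕ) (i j : ℕ)
    (hx : IsX m x) (hx' : IsX m x')
    (hsum : ∀ k, k ≤ m → x k + x' k = y k)
    (hij : i < j) (hjm : j ≤ m)
    (hconst : ∀ k, i ≤ k → k < j → y (k + 1) = y k + 1)
    (hpar : Even (j - i)) (hi : x i < x (i + 1)) : ¬ x (j - 1) < x j := by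
  have alt : ∀ t, i + t < j → (x (i + t) < x (i + t + 1) ↔ Even t) := by
    intro t
    induction t with
    | zero => intro _; simpa using hi
    | succ t ih =>
      intro ht
      have h1 : i + t < j := by omega
      have ih' := ih h1
      set k := i + t with hk
      have hkm : k + 2 ≤ m := by omega
      have f1 : x k ≤ x (k + 1) := hx.1 k (by omega)
      have f2 : x (k + 1) ≤ x (k + 2) := hx.1 (k + 1) (by omega)
      have f3 : x k < x (k + 2) := hx.2 k hkm
      have f4 : x' k < x' (k + 2) := hx'.2 k hkm
      have f5 : x' k ≤ x' (k + 1) := hx'.1 k (by omega)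
      have f6 : x' (k + 1) ≤ x' (k + 2) := hx'.1 (k + 1) (by omega)
      have s0 := hsum k (by omega)
      have s1 := hsum (k + 1) (by omega)
      have s2 := hsum (k + 2) (by omega)
      have c1 : y (k + 1) = y k + 1 := hconst k (by omega) (by omega)
      have c2 : y (k + 2) = y (k + 1) + 1 := hconst (k + 1) (by omega) (by omega)
      have step : (x k < x (k + 1)) ↔ ¬ (x (k + 1) < x (k + 2)) := by
        constructor <;> intro <;> omega
      rw [show i + (t + 1) = k + 1 from by omega, Nat.even_add_one,
        show k + 1 + 1 = k + 2 from rfl]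
      tauto
  have hne : ¬ Even (j - i - 1) := by
    rcases hpar with ⟨r, hr⟩
    rintro ⟨s, hs⟩
    omega
  have ht := alt (j - i - 1) (by omega)
  rw [show i + (j - i - 1) = j - 1 from by omega,
    show j - 1 + 1 = j from by omega] at ht
  intro hA
  exact hne (ht.mp hA)

theorem stmt11 (m : ℕ) (y x x' : ℕ → ℕ) (hy : IsY m y) (hF : FF' m y ≠ ∅)
    (h : IsS m y x x') : SS m x ≠ ∅ ∧ SS m x' ≠ ∅ := by
  obtain ⟨hx, hx', hsum, hun, hint, _⟩ := h
  obtain ⟨p, hp⟩ := Finset.nonempty_iff_ne_empty.mpr hF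
  have hpFF : p ∈ FF m y := (Finset.mem_filter.mp hp).1
  have hodd : Odd (p.2 - p.1 + 1) := (Finset.mem_filter.mp hp).2
  obtain ⟨i, j⟩ := p
  simp only [FF, Finset.mem_filter, Finset.mem_product, Finset.mem_range] at hpFF
  obtain ⟨⟨him, hjm⟩, hij, hleft, hright, hmid⟩ := hpFF
  simp only at hodd hij hleft hright hmid him hjm
  rcases eq_or_lt_of_le hij with rfl | hlt
  · -- i = j: the singleton interval is in RR0
    have hFF : (i, i) ∈ FF m y := by
      simp only [FF, Finset.mem_filter, Finset.mem_product, Finset.mem_range]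
      exact ⟨⟨him, him⟩, le_refl i, hleft, hright, hmid⟩
    have hR0 : i ∈ RR0 m y := by
      simp only [RR0, Finset.mem_filter, Finset.mem_range]
      exact ⟨him, hFF⟩
    rw [← hint] at hR0
    obtain ⟨h1, h2⟩ := Finset.mem_inter.mp hR0
    exact ⟨Finset.ne_empty_of_mem h1, Finset.ne_empty_of_mem h2⟩
  · -- i < j
    have hjm' : j ≤ m := by omega
    have hconst : ∀ k, i ≤ k → k < j → y (k + 1) = y k + 1 := by
      intro k hk1 hk2
      have := hmid k (Finset.mem_Ico.mpr ⟨hk1, hk2⟩)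
      omega
    have hpar : Even (j - i) := by
      rcases hodd with ⟨r, hr⟩
      exact ⟨r, by omega⟩
    have hFFp : (i, j) ∈ FF m y := by
      simp only [FF, Finset.mem_filter, Finset.mem_product, Finset.mem_range]
      exact ⟨⟨him, hjm⟩, hij, hleft, hright, hmid⟩
    have hiRR : i ∈ RR m y := by
      simp only [RR, Finset.mem_filter, Finset.mem_range]
      exact ⟨him, ⟨(i, j), hFFp, Or.inl rfl⟩⟩
    have hjRR : j ∈ RR m y := by
      simp only [RR, Finset.mem_filter, Finset.mem_range]
      exact ⟨hjm, ⟨(i, j), hFFp, Or.inr rfl⟩⟩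
    have hiR0 : i ∉ RR0 m y := by
      simp only [RR0, RR, FF, Finset.mem_filter, Finset.mem_product, Finset.mem_range]
      rintro ⟨-, -, -, -, hr, -⟩
      have hc := hconst i (le_refl i) hlt
      rcases hr with hr | hr
      · omega
      · omega
    have hjR0 : j ∉ RR0 m y := by
      simp only [RR0, RR, FF, Finset.mem_filter, Finset.mem_product, Finset.mem_range]
      rintro ⟨-, -, -, hl, -, -⟩
      have hc := hconst (j - 1) (by omega) (by omega)
      rw [show j - 1 + 1 = j from by omega] at hc
      rcases hl with hl | hl
      · omega
      · omega
    rw [← hun] at hiRR hjRR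
    rw [← hint] at hiR0 hjR0
    have hsum' : ∀ k, k ≤ m → x' k + x k = y k := by
      intro k hk; rw [Nat.add_comm]; exact hsum k hk
    rcases Finset.mem_union.mp hiRR with hiS | hiS <;>
      rcases Finset.mem_union.mp hjRR with hjS | hjS
    · -- both in SS x : contradiction
      exfalso
      have hi1 := (Finset.mem_filter.mp hiS).2
      have hj1 := (Finset.mem_filter.mp hjS).2
      have hAi : x i < x (i + 1) := by
        rcases hi1.2 with h' | h'
        · omega
        · exact h'
      have hAj : x (j - 1) < x j := by
        rcases hj1.1 with h' | h'
        · omega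
        · exact h'
      exact key11 m y x x' i j hx hx' hsum hlt hjm' hconst hpar hAi hAj
    · exact ⟨Finset.ne_empty_of_mem hiS, Finset.ne_empty_of_mem hjS⟩
    · exact ⟨Finset.ne_empty_of_mem hjS, Finset.ne_empty_of_mem hiS⟩
    · -- both in SS x' : contradiction
      exfalso
      have hi1 := (Finset.mem_filter.mp hiS).2
      have hj1 := (Finset.mem_filter.mp hjS).2
      have hAi : x' i < x' (i + 1) := by
        rcases hi1.2 with h' | h'
        · omega
        · exact h'
      have hAj : x' (j - 1) < x' j := by
        rcases hj1.1 with h' | h'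
        · omega
        · exact h'
      exact key11 m y x' x i j hx' hx hsum' hlt hjm' hconst hpar hAi hAj
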